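/- For every real x and every natural number k with x² ≤ k/(2e), the tail of the Taylor series of Φ around 0 beyond degree 2k is small: |Φ(x) - (1/2 + (1/√(2π))·∑_{n=0}^{k-1} ((-1)^n x^{2n+1})/(n!·2^n·(2n+1)))| ≤ (√2/π)·(1/2)^{k-1}. -/

import Mathlib

open MeasureTheory

/-- The standard Gaussian CDF. -/
noncomputable def gaussCDF (x : ℝ) : ℝ :=
  (1 / Real.sqrt (2 * Real.pi)) * ∫ t in Set.Iic x, Real.exp (-t ^ 2 / 2)

open Real in
lemma integrable_gauss' : Integrable (fun t : ℝ => Real.exp (-t ^ 2 / 2)) := by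
  have := integrable_exp_neg_mul_sq (by norm_num : (0:ℝ) < 1/2)
  convert this using 2 with t
  ring_nf

open Real in
lemma integral_Iic_zero_gauss' :
    ∫ t in Set.Iic (0:ℝ), Real.exp (-t ^ 2 / 2) = Real.sqrt (2 * π) / 2 := by
  have h1 := integral_comp_neg_Ioi (0:ℝ) (fun t => Real.exp (-t ^ 2 / 2))
  simp only [neg_zero, neg_sq] at h1
  rw [← h1]
  have h2 := integral_gaussian_Ioi (1/2)
  have : ∀ t : ℝ, Real.exp (-(1/2) * t ^ 2) = Real.exp (-t ^ 2 / 2) := fun t => by ring_nf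
  rw [show (π / (1/2)) = 2 * π by ring] at h2
  rw [← h2]
  exact setIntegral_congr_fun measurableSet_Ioi (fun t _ => (this t).symm)

open Real in
lemma gaussCDF_split' (x : ℝ) :
    gaussCDF x = 1 / 2 + (1 / Real.sqrt (2 * π)) * ∫ t in (0:ℝ)..x, Real.exp (-t ^ 2 / 2) := by
  have hs : (0:ℝ) < Real.sqrt (2 * π) := Real.sqrt_pos.mpr (by positivity)
  have h := intervalIntegral.integral_Iic_sub_Iic
    (f := fun t : ℝ => Real.exp (-t ^ 2 / 2)) (μ := volume) (a := 0) (b := x)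
    integrable_gauss'.integrableOn integrable_gauss'.integrableOn
  rw [integral_Iic_zero_gauss'] at h
  rw [gaussCDF, show (∫ t in Set.Iic x, Real.exp (-t ^ 2 / 2))
    = Real.sqrt (2 * π) / 2 + ∫ t in (0:ℝ)..x, Real.exp (-t ^ 2 / 2) from by linarith]
  rw [mul_add]
  congr 1
  rw [div_mul_div_comm, one_mul, div_eq_div_iff (by positivity) (by norm_num)]
  ring

open Real in
lemma gauss_hasSum' (x : ℝ) :
    HasSum (fun n : ℕ => ((-1 : ℝ) ^ n * x ^ (2 * n + 1)) /
        ((n.factorial : ℝ) * 2 ^ n * (2 * n + 1)))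
      (∫ t in (0:ℝ)..x, Real.exp (-t ^ 2 / 2)) := by
  set f : ℕ → C(ℝ, ℝ) := fun n =>
    ⟨fun t => ((-1 : ℝ) ^ n / ((n.factorial : ℝ) * 2 ^ n)) * t ^ (2 * n), by fun_prop⟩ with hf
  have hnorm : ∀ n, ‖(f n).restrict (⟨Set.uIcc 0 x, isCompact_uIcc⟩ : TopologicalSpace.Compacts ℝ)‖
      ≤ (x ^ 2 / 2) ^ n / (n.factorial : ℝ) := by
    intro n
    have hC : (0:ℝ) ≤ (x ^ 2 / 2) ^ n / (n.factorial : ℝ) := by positivity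
    rw [ContinuousMap.norm_le _ hC]
    rintro ⟨t, ht⟩
    have ht' : |t| ≤ |x| := by
      rcases Set.mem_uIcc.mp ht with ⟨h1, h2⟩ | ⟨h1, h2⟩ <;> rw [abs_le] <;>
        constructor <;> nlinarith [le_abs_self x, neg_abs_le x]
    have ht2 : t ^ 2 ≤ x ^ 2 := by nlinarith [abs_nonneg t, sq_abs t, sq_abs x]
    show ‖((-1 : ℝ) ^ n / ((n.factorial : ℝ) * 2 ^ n)) * t ^ (2 * n)‖ ≤ _
    have heq : ((-1 : ℝ) ^ n / ((n.factorial : ℝ) * 2 ^ n)) * t ^ (2 * n)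
        = (-1 : ℝ) ^ n * ((t ^ 2) ^ n / ((n.factorial : ℝ) * 2 ^ n)) := by
      rw [pow_mul]; ring
    rw [Real.norm_eq_abs, heq, abs_mul, abs_pow, abs_neg, abs_one, one_pow, one_mul,
      abs_of_nonneg (by positivity)]
    rw [div_pow, show (x ^ 2) ^ n / 2 ^ n / (n.factorial : ℝ)
      = (x ^ 2) ^ n / ((n.factorial : ℝ) * 2 ^ n) from by ring]
    gcongr

  have hsum : Summable fun n =>
      ‖(f n).restrict (⟨Set.uIcc 0 x, isCompact_uIcc⟩ : TopologicalSpace.Compacts ℝ)‖ :=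
    Summable.of_nonneg_of_le (fun n => norm_nonneg _) hnorm
      (Real.summable_pow_div_factorial _)
  have H := intervalIntegral.hasSum_intervalIntegral_of_summable_norm (a := 0) (b := x) hsum
  have hexp : ∀ t : ℝ, (∑' n : ℕ, f n t) = Real.exp (-t ^ 2 / 2) := by
    intro t
    have h := NormedSpace.expSeries_div_hasSum_exp (-t ^ 2 / 2)
    rw [← Real.exp_eq_exp_ℝ] at h
    rw [← h.tsum_eq]
    congr 1
    ext n
    show ((-1 : ℝ) ^ n / ((n.factorial : ℝ) * 2 ^ n)) * t ^ (2 * n) = _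
    rw [neg_div, show ((-(t ^ 2 / 2) : ℝ)) ^ n = (-1 : ℝ) ^ n * (t ^ 2 / 2) ^ n from
      neg_pow _ _, div_pow, pow_mul]
    ring
  have hint : ∀ n : ℕ, (∫ t in (0:ℝ)..x, f n t)
      = ((-1 : ℝ) ^ n * x ^ (2 * n + 1)) / ((n.factorial : ℝ) * 2 ^ n * (2 * n + 1)) := by
    intro n
    show (∫ t in (0:ℝ)..x, ((-1 : ℝ) ^ n / ((n.factorial : ℝ) * 2 ^ n)) * t ^ (2 * n)) = _
    rw [intervalIntegral.integral_const_mul, integral_pow, zero_pow (by omega)]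
    push_cast
    field_simp
    try ring
  rw [intervalIntegral.integral_congr (fun t _ => hexp t)] at H
  exact (funext hint : (fun n => ∫ t in (0:ℝ)..x, f n t) = _) ▸ H

open Real in
lemma term_bound' (x : ℝ) (k : ℕ) (hx : x ^ 2 ≤ k / (2 * Real.exp 1)) (n : ℕ) (hn : k ≤ n) :
    |((-1 : ℝ) ^ n * x ^ (2 * n + 1)) / ((n.factorial : ℝ) * 2 ^ n * (2 * n + 1))|
      ≤ |x| * (1 / 4) ^ n := by
  have he : (0:ℝ) < Real.exp 1 := Real.exp_pos 1
  have hfact : (0:ℝ) < (n.factorial : ℝ) := by positivity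
  have h1 : |((-1 : ℝ) ^ n * x ^ (2 * n + 1)) / ((n.factorial : ℝ) * 2 ^ n * (2 * n + 1))|
      = |x| * (x ^ 2) ^ n / ((n.factorial : ℝ) * 2 ^ n * (2 * n + 1)) := by
    rw [abs_div, abs_mul, abs_pow, abs_neg, abs_one, one_pow, one_mul, abs_pow,
      abs_of_nonneg (by positivity : (0:ℝ) ≤ (n.factorial : ℝ) * 2 ^ n * (2 * n + 1)),
      pow_succ, pow_mul, sq_abs]
    ring
  rw [h1]
  have hkey : (x ^ 2 / 2) ^ n ≤ (n.factorial : ℝ) / 4 ^ n := by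
    have h2 : (x ^ 2 / 2) ^ n ≤ ((k : ℝ) / (4 * Real.exp 1)) ^ n := by
      apply pow_le_pow_left₀ (by positivity)
      rw [div_le_div_iff₀ (by norm_num) (by positivity)]
      calc x ^ 2 * (4 * Real.exp 1) ≤ (k / (2 * Real.exp 1)) * (4 * Real.exp 1) := by
            apply mul_le_mul_of_nonneg_right hx (by positivity)
        _ = 2 * k := by field_simp; ring
        _ ≤ k * 2 := le_of_eq (by ring)
    have h3 : ((k : ℝ) / (4 * Real.exp 1)) ^ n ≤ ((n : ℝ) / (4 * Real.exp 1)) ^ n := by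
      apply pow_le_pow_left₀ (by positivity)
      gcongr
    have h4 : ((n : ℝ)) ^ n ≤ (n.factorial : ℝ) * Real.exp 1 ^ n := by
      have h := Real.pow_div_factorial_le_exp (x := (n:ℝ)) (Nat.cast_nonneg n) n
      have hexp : Real.exp (n:ℝ) = Real.exp 1 ^ n := by
        rw [← Real.exp_nat_mul, mul_one]
      rw [hexp, div_le_iff₀ hfact] at h
      exact h.trans_eq (mul_comm _ _)
    refine (h2.trans h3).trans ?_
    rw [div_pow, mul_pow]
    rw [div_le_div_iff₀ (by positivity) (by positivity)]
    calc (n:ℝ) ^ n * 4 ^ n ≤ (n.factorial : ℝ) * Real.exp 1 ^ n * 4 ^ n := by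
          exact mul_le_mul_of_nonneg_right h4 (by positivity)
      _ = (n.factorial : ℝ) * (4 ^ n * Real.exp 1 ^ n) := by ring
  have hpow : (x ^ 2) ^ n ≤ (n.factorial : ℝ) / 4 ^ n * 2 ^ n := by
    calc (x ^ 2) ^ n = (x ^ 2 / 2) ^ n * 2 ^ n := by
          rw [div_pow]; field_simp
      _ ≤ (n.factorial : ℝ) / 4 ^ n * 2 ^ n := by gcongr
  have h5 : (1:ℝ) ≤ 2 * (n:ℝ) + 1 := by
    have := Nat.cast_nonneg (α:=ℝ) n; linarith
  calc |x| * (x ^ 2) ^ n / ((n.factorial : ℝ) * 2 ^ n * (2 * n + 1))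
      ≤ |x| * ((n.factorial : ℝ) / 4 ^ n * 2 ^ n) / ((n.factorial : ℝ) * 2 ^ n * (2 * n + 1)) := by
        gcongr
    _ = |x| * (1 / 4) ^ n / (2 * (n:ℝ) + 1) := by
        rw [div_pow, one_pow]
        field_simp
    _ ≤ |x| * (1 / 4) ^ n := div_le_self (by positivity) h5

set_option maxHeartbeats 1000000 in
open Real in
/-- Taylor truncation error of the Gaussian CDF. -/
theorem gaussCDF_taylor_truncation (x : ℝ) (k : ℕ)
    (hx : x ^ 2 ≤ k / (2 * Real.exp 1)) :
    |gaussCDF x - (1 / 2 + (1 / Real.sqrt (2 * Real.pi)) *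
        ∑ n ∈ Finset.range k,
          ((-1 : ℝ) ^ n * x ^ (2 * n + 1)) /
            ((n.factorial : ℝ) * 2 ^ n * (2 * n + 1)))|
      ≤ (Real.sqrt 2 / Real.pi) * (1 / 2) ^ (k - 1) := by
  have hs : (0:ℝ) < Real.sqrt (2 * π) := Real.sqrt_pos.mpr (by positivity)
  set a : ℕ → ℝ := fun n => ((-1 : ℝ) ^ n * x ^ (2 * n + 1)) /
      ((n.factorial : ℝ) * 2 ^ n * (2 * n + 1)) with ha
  have hS := gauss_hasSum' x
  rw [gaussCDF_split' x]
  by_cases hx0 : x = 0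
  · subst hx0
    have hz : ∀ n ∈ Finset.range k, a n = 0 := by
      intro n _
      simp [ha, zero_pow (show 2 * n + 1 ≠ 0 by omega)]
    rw [Finset.sum_eq_zero hz, intervalIntegral.integral_same]
    simp only [mul_zero, add_zero, sub_self, abs_zero]
    positivity
  · -- x ≠ 0, hence k ≥ 1
    have hx2 : (0:ℝ) < x ^ 2 := by
      have := abs_pos.mpr hx0; nlinarith [sq_abs x]
    have hk : 1 ≤ k := by
      rcases Nat.eq_zero_or_pos k with rfl | h
      · exfalso; simp only [Nat.cast_zero, zero_div] at hx; linarith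
      · exact h
    -- tail bound
    have hbound : ∀ i : ℕ, |a (i + k)| ≤ |x| * ((1/4:ℝ) ^ i * (1/4) ^ k) := by
      intro i
      calc |a (i + k)| ≤ |x| * (1/4:ℝ) ^ (i + k) :=
            term_bound' x k hx (i + k) (Nat.le_add_left k i)
        _ = |x| * ((1/4:ℝ) ^ i * (1/4) ^ k) := by rw [pow_add]
    have hgeo : Summable (fun i : ℕ => |x| * ((1/4:ℝ) ^ i * (1/4) ^ k)) :=
      (((summable_geometric_of_lt_one (by norm_num) (by norm_num)).mul_right _).mul_left _)
    have htsum : Summable (fun i => |a (i + k)|) :=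
      Summable.of_nonneg_of_le (fun i => abs_nonneg _) hbound hgeo
    have htail : |∑' i : ℕ, a (i + k)| ≤ |x| * (1/4:ℝ) ^ k * (4/3) := by
      calc |∑' i : ℕ, a (i + k)| ≤ ∑' i : ℕ, |a (i + k)| := by
            have h := norm_tsum_le_tsum_norm (f := fun i : ℕ => a (i + k))
              (by simpa only [Real.norm_eq_abs] using htsum)
            simpa only [Real.norm_eq_abs] using h
        _ ≤ ∑' i : ℕ, |x| * ((1/4:ℝ) ^ i * (1/4) ^ k) := Summable.tsum_le_tsum hbound htsum hgeo
        _ = |x| * (1/4:ℝ) ^ k * (4/3) := by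
            rw [tsum_mul_left, tsum_mul_right, tsum_geometric_of_lt_one (by norm_num)
              (by norm_num)]
            norm_num
            ring
    have hdiff : (∫ t in (0:ℝ)..x, Real.exp (-t ^ 2 / 2)) - ∑ n ∈ Finset.range k, a n
        = ∑' i : ℕ, a (i + k) := by
      have h := Summable.sum_add_tsum_nat_add k hS.summable
      rw [hS.tsum_eq] at h
      linarith
    have hLHS : (1 / 2 + (1 / Real.sqrt (2 * π)) * ∫ t in (0:ℝ)..x, Real.exp (-t ^ 2 / 2))
        - (1 / 2 + (1 / Real.sqrt (2 * π)) * ∑ n ∈ Finset.range k, a n)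
        = (1 / Real.sqrt (2 * π)) * ∑' i : ℕ, a (i + k) := by
      rw [← hdiff]; ring
    rw [hLHS, abs_mul, abs_of_nonneg (by positivity : (0:ℝ) ≤ 1 / Real.sqrt (2 * π))]
    -- |x| ≤ √k / 2
    have he2 : (2:ℝ) ≤ Real.exp 1 := by nlinarith [Real.add_one_le_exp 1]
    have hx4 : x ^ 2 ≤ (k:ℝ) / 4 := by
      refine hx.trans ?_
      rw [div_le_div_iff₀ (by positivity) (by norm_num)]
      nlinarith [Nat.cast_nonneg (α:=ℝ) k]
    have hxs : |x| ≤ Real.sqrt k / 2 := by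
      have h := Real.sqrt_le_sqrt hx4
      rw [Real.sqrt_sq_eq_abs] at h
      refine h.trans (le_of_eq ?_)
      rw [show ((k:ℝ)/4) = k * (1/2)^2 by ring, Real.sqrt_mul (Nat.cast_nonneg k),
        Real.sqrt_sq (by norm_num)]
      ring
    -- √k * (1/2)^k ≤ 1
    have h2k : Real.sqrt k ≤ 2 ^ k := by
      have h1t : (1:ℝ) ≤ 2 ^ k := one_le_pow₀ (by norm_num)
      have hlt : (k:ℝ) ≤ 2 ^ k := by exact_mod_cast (Nat.lt_two_pow_self (n := k)).le
      have hk2 : (k:ℝ) ≤ (2 ^ k) ^ 2 := by nlinarith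
      calc Real.sqrt k ≤ Real.sqrt ((2 ^ k) ^ 2) := Real.sqrt_le_sqrt hk2
        _ = 2 ^ k := Real.sqrt_sq (by positivity)
    have hp2 : ((1:ℝ)/2) ^ k = ((2:ℝ) ^ k)⁻¹ := by
      rw [div_pow, one_pow, one_div]
    have hsp : Real.sqrt k * ((1:ℝ)/2) ^ k ≤ 1 := by
      rw [hp2, ← div_eq_mul_inv, div_le_one (by positivity)]
      exact h2k
    have hxp : |x| * ((1:ℝ)/2) ^ k ≤ 1/2 := by
      calc |x| * ((1:ℝ)/2) ^ k ≤ (Real.sqrt k / 2) * ((1:ℝ)/2) ^ k := by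
            exact mul_le_mul_of_nonneg_right hxs (by positivity)
        _ = (Real.sqrt k * ((1:ℝ)/2) ^ k) / 2 := by ring
        _ ≤ 1/2 := by linarith
    have hq : (1/4:ℝ) ^ k = (((1:ℝ)/2) ^ k) ^ 2 := by
      rw [← pow_mul, show ((1/4:ℝ)) = (1/2:ℝ)^2 by norm_num, ← pow_mul, mul_comm]
    have hpow2 : ((1/2:ℝ)) ^ (k - 1) = 2 * (1/2) ^ k := by
      obtain ⟨m, rfl⟩ := Nat.exists_eq_add_of_le hk
      rw [show 1 + m - 1 = m from by omega, pow_add]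
      ring
    -- numeric inequality
    have hnum : (2/3 : ℝ) / Real.sqrt (2 * π) ≤ 2 * Real.sqrt 2 / π := by
      rw [div_le_div_iff₀ hs Real.pi_pos]
      have h2 : Real.sqrt 2 * Real.sqrt (2 * π) = 2 * Real.sqrt π := by
        rw [← Real.sqrt_mul (by norm_num), show (2:ℝ) * (2 * π) = 2 ^ 2 * π by ring,
          Real.sqrt_mul (by positivity), Real.sqrt_sq (by norm_num)]
      have hs1 : Real.sqrt π ≤ 2 := by
        have h := Real.sqrt_le_sqrt (show (π:ℝ) ≤ 4 from by linarith [Real.pi_le_four])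
        rwa [show (4:ℝ) = 2 ^ 2 by norm_num, Real.sqrt_sq (by norm_num)] at h
      calc (2/3) * π ≤ 4 * Real.sqrt π := by
            nlinarith [Real.sq_sqrt Real.pi_pos.le, Real.sqrt_nonneg π]
        _ = 2 * (Real.sqrt 2 * Real.sqrt (2 * π)) := by rw [h2]; ring
        _ = 2 * Real.sqrt 2 * Real.sqrt (2 * π) := by ring
    have hpp : (0:ℝ) < ((1:ℝ)/2) ^ k := by positivity
    calc (1 / Real.sqrt (2 * π)) * |∑' i : ℕ, a (i + k)|
        ≤ (1 / Real.sqrt (2 * π)) * (|x| * (1/4:ℝ) ^ k * (4/3)) := by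
          exact mul_le_mul_of_nonneg_left htail (by positivity)
      _ = (|x| * ((1:ℝ)/2) ^ k) * (((1:ℝ)/2) ^ k * (4/3)) / Real.sqrt (2 * π) := by
          rw [hq]; ring
      _ ≤ (1/2) * (((1:ℝ)/2) ^ k * (4/3)) / Real.sqrt (2 * π) := by
          gcongr
      _ = ((2/3:ℝ) / Real.sqrt (2 * π)) * ((1:ℝ)/2) ^ k := by ring
      _ ≤ (2 * Real.sqrt 2 / π) * ((1:ℝ)/2) ^ k := by
          exact mul_le_mul_of_nonneg_right hnum hpp.le
      _ = (Real.sqrt 2 / π) * (2 * ((1:ℝ)/2) ^ k) := by ring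
      _ = (Real.sqrt 2 / π) * (1/2) ^ (k - 1) := by rw [hpow2]
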